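/- For every integer n ≥ 1, every j ∈ {1, 2, 3} and every t ∈ {0, 1, 2}, there exist no nonnegative integers α and β such that (30n + 18)·α + (36n + 22)·β = (540n² + 654n + 197) − d_j − t·(180n² + 218n + 66), where d₁ = 126n + 75, d₂ = 132n + 79 and d₃ = 138n + 83. -/
import Mathlib

/-- Key lemma: if `(15n+9)α + (18n+11)β = m` with `α, β ≥ 0`, and there is `q` with
`(18n+11)q < 6m` and `5m < (15n+9)(q+1)`, we get a contradiction, since the integer
`k = 5α + 6β` would satisfy `q < k < q + 1` (using `5(18n+11) - 6(15n+9) = 1`). -/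
theorem no_rep_aux (n α β m q : ℤ) (hn : 1 ≤ n) (hα : 0 ≤ α) (hβ : 0 ≤ β)
    (heq : (15 * n + 9) * α + (18 * n + 11) * β = m)
    (h1 : (18 * n + 11) * q < 6 * m)
    (h2 : 5 * m < (15 * n + 9) * (q + 1)) : False := by
  have hk1 : (18 * n + 11) * (5 * α + 6 * β) = α + 6 * m := by linear_combination 6 * heq
  have hk2 : (15 * n + 9) * (5 * α + 6 * β) = -β + 5 * m := by linear_combination 5 * heq
  have hb : (0 : ℤ) ≤ 18 * n + 11 := by linarith
  have ha : (0 : ℤ) ≤ 15 * n + 9 := by linarith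
  have h3 : q < 5 * α + 6 * β :=
    lt_of_mul_lt_mul_left (by linarith : (18 * n + 11) * q < (18 * n + 11) * (5 * α + 6 * β)) hb
  have h4 : 5 * α + 6 * β < q + 1 :=
    lt_of_mul_lt_mul_left (by linarith : (15 * n + 9) * (5 * α + 6 * β) < (15 * n + 9) * (q + 1)) ha
  omega

/-- For every integer `n ≥ 1`, every `j ∈ {1, 2, 3}` and every `t ∈ {0, 1, 2}`, there are
no nonnegative integers `α`, `β` with
`(30n + 18)·α + (36n + 22)·β = (540n² + 654n + 197) − d_j − t·(180n² + 218n + 66)`,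
where `d₁ = 126n + 75`, `d₂ = 132n + 79` and `d₃ = 138n + 83`. -/
theorem no_solutions_degree_z (n : ℤ) (hn : 1 ≤ n)
    (d : ℤ) (hd : d = 126 * n + 75 ∨ d = 132 * n + 79 ∨ d = 138 * n + 83)
    (t : ℤ) (ht : t = 0 ∨ t = 1 ∨ t = 2) :
    ¬ ∃ α β : ℤ, 0 ≤ α ∧ 0 ≤ β ∧ (30 * n + 18) * α + (36 * n + 22) * β =
      (540 * n ^ 2 + 654 * n + 197) - d - t * (180 * n ^ 2 + 218 * n + 66) := by
  rintro ⟨α, β, hα, hβ, heq⟩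
  rcases ht with rfl | rfl | rfl <;> rcases hd with rfl | rfl | rfl
  · have h2m : 2*((15*n+9)*α+(18*n+11)*β) = 2*(270*n^2+264*n+61) := by linear_combination heq
    exact no_rep_aux n α β (270*n^2+264*n+61) (90*n+33) hn hα hβ
      (by linarith) (by nlinarith) (by nlinarith)
  · have h2m : 2*((15*n+9)*α+(18*n+11)*β) = 2*(270*n^2+261*n+59) := by linear_combination heq
    exact no_rep_aux n α β (270*n^2+261*n+59) (90*n+32) hn hα hβ
      (by linarith) (by nlinarith) (by nlinarith)
  · have h2m : 2*((15*n+9)*α+(18*n+11)*β) = 2*(270*n^2+258*n+57) := by linear_combination heq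
    exact no_rep_aux n α β (270*n^2+258*n+57) (90*n+31) hn hα hβ
      (by linarith) (by nlinarith) (by nlinarith)
  · have h2m : 2*((15*n+9)*α+(18*n+11)*β) = 2*(180*n^2+155*n+28) := by linear_combination heq
    exact no_rep_aux n α β (180*n^2+155*n+28) (60*n+15) hn hα hβ
      (by linarith) (by nlinarith) (by nlinarith)
  · have h2m : 2*((15*n+9)*α+(18*n+11)*β) = 2*(180*n^2+152*n+26) := by linear_combination heq
    exact no_rep_aux n α β (180*n^2+152*n+26) (60*n+14) hn hα hβ
      (by linarith) (by nlinarith) (by nlinarith)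
  · have h2m : 2*((15*n+9)*α+(18*n+11)*β) = 2*(180*n^2+149*n+24) := by linear_combination heq
    exact no_rep_aux n α β (180*n^2+149*n+24) (60*n+13) hn hα hβ
      (by linarith) (by nlinarith) (by nlinarith)
  · have h2m : 2*((15*n+9)*α+(18*n+11)*β) = 2*(90*n^2+46*n-5) := by linear_combination heq
    exact no_rep_aux n α β (90*n^2+46*n-5) (30*n-3) hn hα hβ
      (by linarith) (by nlinarith) (by nlinarith)
  · have h2m : 2*((15*n+9)*α+(18*n+11)*β) = 2*(90*n^2+43*n-7) := by linear_combination heq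
    exact no_rep_aux n α β (90*n^2+43*n-7) (30*n-4) hn hα hβ
      (by linarith) (by nlinarith) (by nlinarith)
  · have h2m : 2*((15*n+9)*α+(18*n+11)*β) = 2*(90*n^2+40*n-9) := by linear_combination heq
    exact no_rep_aux n α β (90*n^2+40*n-9) (30*n-5) hn hα hβ
      (by linarith) (by nlinarith) (by nlinarith)
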